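/- For any trace-preserving positive linear map G on 2×2 complex matrices and any two one-qubit density matrices ρ and τ, the trace norm of G(ρ) − G(τ) is at most the trace norm of ρ − τ. -/

import Mathlib

open Matrix
open scoped ComplexOrder

/-- A one-qubit density matrix: Hermitian positive semidefinite with trace 1. -/
def IsDensity (ρ : Matrix (Fin 2) (Fin 2) ℂ) : Prop :=
  ρ.PosSemidef ∧ ρ.trace = 1

/-- The trace norm ‖V‖₁ = Tr √(V†V). -/
noncomputable def traceNorm (V : Matrix (Fin 2) (Fin 2) ℂ) : ℝ :=
  (((Matrix.posSemidef_conjTranspose_mul_self V).1.eigenvectorUnitary.1 *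
      diagonal (((↑) : ℝ → ℂ) ∘ Real.sqrt ∘ (Matrix.posSemidef_conjTranspose_mul_self V).1.eigenvalues) *
      (star (Matrix.posSemidef_conjTranspose_mul_self V).1.eigenvectorUnitary :
        Matrix (Fin 2) (Fin 2) ℂ)).trace).re

namespace Aux

lemma herm_offdiag {M : Matrix (Fin 2) (Fin 2) ℂ} (h : M.IsHermitian) :
    M 1 0 = starRingEnd ℂ (M 0 1) := by
  have := congrFun (congrFun h 1) 0
  simpa [conjTranspose_apply] using this.symm

lemma herm_diag_im {M : Matrix (Fin 2) (Fin 2) ℂ} (h : M.IsHermitian) (i : Fin 2) :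
    (M i i).im = 0 := by
  have := congrFun (congrFun h i) i
  simp only [conjTranspose_apply] at this
  have := congrArg Complex.im this
  simp at this
  linarith

lemma psd_diag_re_nonneg {M : Matrix (Fin 2) (Fin 2) ℂ} (h : M.PosSemidef) (i : Fin 2) :
    0 ≤ (M i i).re := by
  have := h.re_dotProduct_nonneg (Pi.single i 1)
  simpa [dotProduct, mulVec, Fin.sum_univ_two, Pi.single_apply] using this

lemma psd_det_cond {M : Matrix (Fin 2) (Fin 2) ℂ} (h : M.PosSemidef) :
    Complex.normSq (M 0 1) ≤ (M 0 0).re * (M 1 1).re := by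
  have h00 := psd_diag_re_nonneg h 0
  have h11 := psd_diag_re_nonneg h 1
  have h10 := herm_offdiag h.1
  have him0 := herm_diag_im h.1 0
  have him1 := herm_diag_im h.1 1
  rw [Complex.normSq_apply]
  by_cases hp : (M 0 0).re = 0
  · have hx := h.re_dotProduct_nonneg ![-(((M 1 1).re : ℂ) + 1), starRingEnd ℂ (M 0 1)]
    simp only [RCLike.re_to_complex, dotProduct, mulVec, Fin.sum_univ_two, h10,
      Matrix.cons_val_zero, Matrix.cons_val_one, Matrix.head_cons, Pi.star_apply,
      RCLike.star_def, map_neg, map_add, _root_.map_one, Complex.conj_ofReal,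
      Complex.conj_conj, Complex.add_re, Complex.mul_re, Complex.mul_im, Complex.add_im,
      Complex.neg_re, Complex.neg_im, Complex.one_re, Complex.one_im, Complex.ofReal_re,
      Complex.ofReal_im, Complex.conj_re, Complex.conj_im] at hx
    rw [him0, him1] at hx
    ring_nf at hx
    nlinarith [hx, hp, sq_nonneg ((M 0 1).re), sq_nonneg ((M 0 1).im)]
  · have hp' : 0 < (M 0 0).re := lt_of_le_of_ne h00 (Ne.symm hp)
    have hx := h.re_dotProduct_nonneg ![-(M 0 1), M 0 0]
    simp only [RCLike.re_to_complex, dotProduct, mulVec, Fin.sum_univ_two, h10,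
      Matrix.cons_val_zero, Matrix.cons_val_one, Matrix.head_cons, Pi.star_apply,
      RCLike.star_def, map_neg, Complex.add_re, Complex.mul_re, Complex.mul_im,
      Complex.add_im, Complex.neg_re, Complex.neg_im, Complex.conj_re, Complex.conj_im] at hx
    rw [him0, him1] at hx
    ring_nf at hx
    nlinarith [hx, hp']

lemma psd_of_cond {M : Matrix (Fin 2) (Fin 2) ℂ} (hH : M.IsHermitian)
    (h00 : 0 ≤ (M 0 0).re) (h11 : 0 ≤ (M 1 1).re)
    (hdet : Complex.normSq (M 0 1) ≤ (M 0 0).re * (M 1 1).re) : M.PosSemidef := by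
  refine PosSemidef.of_dotProduct_mulVec_nonneg hH fun x => ?_
  have h10 := herm_offdiag hH
  have him0 := herm_diag_im hH 0
  have him1 := herm_diag_im hH 1
  rw [Complex.normSq_apply] at hdet
  rw [Complex.nonneg_iff]
  have hexp : dotProduct (star x) (M *ᵥ x) =
      (starRingEnd ℂ (x 0)) * (M 0 0 * x 0 + M 0 1 * x 1)
      + (starRingEnd ℂ (x 1)) * (M 1 0 * x 0 + M 1 1 * x 1) := by
    simp [dotProduct, mulVec, Fin.sum_univ_two, mul_add]
  rw [hexp, h10]
  constructor
  · simp only [Complex.add_re, Complex.mul_re, Complex.mul_im, Complex.add_im,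
      Complex.conj_re, Complex.conj_im, him0, him1, mul_zero, zero_mul, neg_zero,
      add_zero, zero_add, sub_zero]
    by_cases hp : (M 0 0).re = 0
    · have hβ : (M 0 1).re = 0 := by nlinarith [sq_nonneg ((M 0 1).re), sq_nonneg ((M 0 1).im)]
      have hγ : (M 0 1).im = 0 := by nlinarith [sq_nonneg ((M 0 1).re), sq_nonneg ((M 0 1).im)]
      rw [hp, hβ, hγ]
      nlinarith [sq_nonneg ((x 1).re), sq_nonneg ((x 1).im), h11]
    · have hp' : 0 < (M 0 0).re := lt_of_le_of_ne h00 (Ne.symm hp)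
      nlinarith [sq_nonneg ((M 0 0).re * (x 0).re + (M 0 1).re * (x 1).re - (M 0 1).im * (x 1).im),
        sq_nonneg ((M 0 0).re * (x 0).im + (M 0 1).re * (x 1).im + (M 0 1).im * (x 1).re),
        mul_nonneg (sub_nonneg.2 hdet) (add_nonneg (sq_nonneg ((x 1).re)) (sq_nonneg ((x 1).im))),
        hp']
  · simp only [Complex.add_re, Complex.mul_re, Complex.mul_im, Complex.add_im,
      Complex.conj_re, Complex.conj_im, him0, him1, mul_zero, zero_mul, neg_zero,
      add_zero, zero_add, sub_zero]
    ring

lemma key_ineq {A B : Matrix (Fin 2) (Fin 2) ℂ} (hA : A.PosSemidef) (hB : B.PosSemidef)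
    {c : ℝ} (htrA : A.trace = (c : ℂ)) (htrB : B.trace = (c : ℂ)) :
    ((A - B) 0 0).re ^ 2 + Complex.normSq ((A - B) 0 1) ≤ c ^ 2 := by
  -- R := c • 1 - A + B is PSD
  set R : Matrix (Fin 2) (Fin 2) ℂ := (c : ℂ) • 1 - A + B with hR
  have htA : (A 0 0).re + (A 1 1).re = c := by
    have := congrArg Complex.re htrA
    simpa [Matrix.trace, Fin.sum_univ_two] using this
  have htB : (B 0 0).re + (B 1 1).re = c := by
    have := congrArg Complex.re htrB
    simpa [Matrix.trace, Fin.sum_univ_two] using this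
  have hdA := psd_det_cond hA
  have hCA : ((c : ℂ) • 1 - A).PosSemidef := by
    apply psd_of_cond
    · have h1 : (((c : ℂ)) • (1 : Matrix (Fin 2) (Fin 2) ℂ)).IsHermitian := by
        unfold Matrix.IsHermitian
        rw [conjTranspose_smul, conjTranspose_one, Complex.star_def, Complex.conj_ofReal]
      exact h1.sub hA.1
    · simp only [Matrix.sub_apply, Matrix.smul_apply, one_apply_eq, Complex.sub_re, smul_eq_mul, mul_one,
        Complex.ofReal_re]
      linarith [psd_diag_re_nonneg hA 1]
    · simp only [Matrix.sub_apply, Matrix.smul_apply, one_apply_eq, Complex.sub_re, smul_eq_mul, mul_one,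
        Complex.ofReal_re]
      linarith [psd_diag_re_nonneg hA 0]
    · have h01 : (((c : ℂ) • 1 - A) 0 1) = -(A 0 1) := by
        simp [one_apply]
      rw [h01]
      simp only [Matrix.sub_apply, Matrix.smul_apply, one_apply_eq, Complex.sub_re, smul_eq_mul, mul_one,
        Complex.ofReal_re, Complex.normSq_neg]
      calc Complex.normSq (A 0 1) ≤ (A 0 0).re * (A 1 1).re := hdA
        _ = (c - (A 1 1).re) * (c - (A 0 0).re) := by rw [show c - (A 1 1).re = (A 0 0).re by linarith, show c - (A 0 0).re = (A 1 1).re by linarith]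
        _ = _ := by ring
  have hRpsd : R.PosSemidef := by
    rw [hR]
    exact hCA.add hB
  have hdR := psd_det_cond hRpsd
  have e01 : R 0 1 = -((A - B) 0 1) := by simp [hR, one_apply]; ring
  have e00 : (R 0 0).re = c - ((A - B) 0 0).re := by simp [hR, one_apply]; ring
  have e11 : (R 1 1).re = c + ((A - B) 0 0).re := by
    simp only [hR, Matrix.add_apply, Matrix.sub_apply, Matrix.smul_apply, one_apply_eq, Complex.add_re,
      Complex.sub_re, smul_eq_mul, mul_one, Complex.ofReal_re]
    linarith
  rw [e01, e00, e11, Complex.normSq_neg] at hdR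
  nlinarith [hdR]

lemma sqrt_smul_one_psd (k : ℝ) : ((((Real.sqrt k : ℝ)) : ℂ) • (1 : Matrix (Fin 2) (Fin 2) ℂ)).PosSemidef := by
  rw [smul_one_eq_diagonal]
  exact PosSemidef.diagonal fun i => Complex.zero_le_real.2 (Real.sqrt_nonneg k)

lemma trace_sqrt_scalar (H : Matrix (Fin 2) (Fin 2) ℂ) (hH : H.IsHermitian) {k : ℝ}
    (hk : H = (k : ℂ) • 1) :
    ((hH.eigenvectorUnitary.1 * diagonal (((↑) : ℝ → ℂ) ∘ Real.sqrt ∘ hH.eigenvalues) *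
      (star hH.eigenvectorUnitary : Matrix (Fin 2) (Fin 2) ℂ)).trace).re = 2 * Real.sqrt k := by
  have hev : ∀ i, hH.eigenvalues i = k := by
    intro i
    rw [hH.eigenvalues_eq i]
    have h1 := hH.eigenvectorBasis.orthonormal.1 i
    rw [@norm_eq_sqrt_re_inner ℂ, Real.sqrt_eq_one, EuclideanSpace.inner_eq_star_dotProduct] at h1
    generalize (hH.eigenvectorBasis i).ofLp = v at h1 ⊢
    rw [hk, Matrix.smul_mulVec, Matrix.one_mulVec, dotProduct_smul, smul_eq_mul, dotProduct_comm]
    simp only [RCLike.re_to_complex] at h1 ⊢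
    rw [Complex.re_ofReal_mul, h1, mul_one]
  rw [trace_mul_comm, ← Matrix.mul_assoc]
  have hU : (star hH.eigenvectorUnitary : Matrix (Fin 2) (Fin 2) ℂ) * hH.eigenvectorUnitary.1 = 1 :=
    Unitary.coe_star_mul_self _
  rw [hU, Matrix.one_mul]
  simp [Matrix.trace, Fin.sum_univ_two, hev]

lemma traceNorm_herm_traceless {M : Matrix (Fin 2) (Fin 2) ℂ} (hH : M.IsHermitian)
    (htr : M.trace = 0) :
    traceNorm M = 2 * Real.sqrt ((M 0 0).re ^ 2 + Complex.normSq (M 0 1)) := by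
  set k : ℝ := (M 0 0).re ^ 2 + Complex.normSq (M 0 1) with hk
  have hknn : 0 ≤ k := add_nonneg (sq_nonneg _) (Complex.normSq_nonneg _)
  have h10 := herm_offdiag hH
  have him := herm_diag_im hH 0
  have h11 : M 1 1 = -(M 0 0) := by
    have : M 0 0 + M 1 1 = 0 := by simpa [Matrix.trace, Fin.sum_univ_two] using htr
    linear_combination this
  have hsq : Mᴴ * M = ((k : ℂ)) • 1 := by
    rw [hH]
    ext i j
    fin_cases i <;> fin_cases j <;>
      simp [mul_apply, Fin.sum_univ_two, h11, h10, one_apply, hk,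
        Complex.ext_iff, Complex.normSq_apply, Complex.mul_re, Complex.mul_im, him,
        ← Complex.ofReal_pow] <;>
      first | trivial | (constructor <;> first | trivial | (push_cast; ring))
  have hs : (((Real.sqrt k : ℝ) : ℂ) • (1 : Matrix (Fin 2) (Fin 2) ℂ)) ^ 2 = Mᴴ * M := by
    rw [hsq, sq, smul_mul_smul_comm, one_mul, ← Complex.ofReal_mul,
      Real.mul_self_sqrt hknn]
  unfold traceNorm
  exact trace_sqrt_scalar _ _ hsq

lemma psd_smul {A : Matrix (Fin 2) (Fin 2) ℂ} (hA : A.PosSemidef) {t : ℝ} (ht : 0 ≤ t) :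
    (((t : ℝ) : ℂ) • A).PosSemidef := by
  constructor
  · unfold Matrix.IsHermitian
    rw [conjTranspose_smul, hA.1]
    congr 1
    simp [Complex.ext_iff]
  · exact (hA.smul (Complex.zero_le_real.2 ht)).2

end Aux

theorem positive_map_trace_norm_contraction
    (G : Matrix (Fin 2) (Fin 2) ℂ →ₗ[ℂ] Matrix (Fin 2) (Fin 2) ℂ)
    (hTP : ∀ A : Matrix (Fin 2) (Fin 2) ℂ, (G A).trace = A.trace)
    (hPos : ∀ ρ, IsDensity ρ → IsDensity (G ρ))
    (ρ τ : Matrix (Fin 2) (Fin 2) ℂ) (hρ : IsDensity ρ) (hτ : IsDensity τ) :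
    traceNorm (G ρ - G τ) ≤ traceNorm (ρ - τ) := by
  set Δ := ρ - τ with hΔ
  have hΔH : Δ.IsHermitian := hρ.1.1.sub hτ.1.1
  have hΔtr : Δ.trace = 0 := by
    rw [hΔ, trace_sub, hρ.2, hτ.2, sub_self]
  set M := G ρ - G τ with hM
  have hMH : M.IsHermitian := (hPos ρ hρ).1.1.sub (hPos τ hτ).1.1
  have hMtr : M.trace = 0 := by
    rw [hM, trace_sub, (hPos ρ hρ).2, (hPos τ hτ).2, sub_self]
  rw [Aux.traceNorm_herm_traceless hΔH hΔtr, Aux.traceNorm_herm_traceless hMH hMtr]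
  set k : ℝ := (Δ 0 0).re ^ 2 + Complex.normSq (Δ 0 1) with hk
  have hknn : 0 ≤ k := add_nonneg (sq_nonneg _) (Complex.normSq_nonneg _)
  set t := Real.sqrt k with htdef
  have htnn : 0 ≤ t := Real.sqrt_nonneg k
  have ht2 : t ^ 2 = k := Real.sq_sqrt hknn
  -- suffices to show k' ≤ k
  have hmain : (M 0 0).re ^ 2 + Complex.normSq (M 0 1) ≤ k := by
    by_cases ht0 : t = 0
    · -- Δ = 0
      have hk0 : k = 0 := by rw [← ht2, ht0]; ring
      have ha : (Δ 0 0).re = 0 := by nlinarith [Complex.normSq_nonneg (Δ 0 1), sq_nonneg ((Δ 0 0).re)]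
      have hb : Δ 0 1 = 0 := by
        have : Complex.normSq (Δ 0 1) = 0 := by nlinarith [Complex.normSq_nonneg (Δ 0 1), sq_nonneg ((Δ 0 0).re)]
        exact Complex.normSq_eq_zero.1 this
      have hΔ0 : Δ = 0 := by
        have h10 := Aux.herm_offdiag hΔH
        have him := Aux.herm_diag_im hΔH 0
        have h11 : Δ 1 1 = -(Δ 0 0) := by
          have : Δ 0 0 + Δ 1 1 = 0 := by simpa [Matrix.trace, Fin.sum_univ_two] using hΔtr
          linear_combination this
        ext i j
        fin_cases i <;> fin_cases j <;>
          simp [h10, h11, hb, Complex.ext_iff, ha, him]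
      have hρτ : ρ = τ := by rwa [hΔ, sub_eq_zero] at hΔ0
      have hM0 : M = 0 := by rw [hM, hρτ, sub_self]
      simp [hM0, hknn]
    · have htpos : 0 < t := lt_of_le_of_ne htnn (Ne.symm ht0)
      -- define P, Q
      set P : Matrix (Fin 2) (Fin 2) ℂ := (2:ℂ)⁻¹ • (((t : ℝ) : ℂ) • 1 + Δ) with hP
      set Q : Matrix (Fin 2) (Fin 2) ℂ := (2:ℂ)⁻¹ • (((t : ℝ) : ℂ) • 1 - Δ) with hQ
      have h10 := Aux.herm_offdiag hΔH
      have him := Aux.herm_diag_im hΔH 0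
      have h11 : Δ 1 1 = -(Δ 0 0) := by
        have : Δ 0 0 + Δ 1 1 = 0 := by simpa [Matrix.trace, Fin.sum_univ_two] using hΔtr
        linear_combination this
      have hsq_le : (Δ 0 0).re ^ 2 ≤ k := by nlinarith [Complex.normSq_nonneg (Δ 0 1)]
      have habs : |(Δ 0 0).re| ≤ t := by
        rw [htdef, ← Real.sqrt_sq_eq_abs]
        exact Real.sqrt_le_sqrt hsq_le
      have habs' := abs_le.1 habs
      have hb2 : Complex.normSq (Δ 0 1) = t ^ 2 - (Δ 0 0).re ^ 2 := by
        rw [ht2, hk]; ring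
      have htC : ((t : ℝ) : ℂ) ≠ 0 := by
        exact_mod_cast Complex.ofReal_ne_zero.2 ht0
      have hPH : P.IsHermitian := by
        unfold Matrix.IsHermitian
        rw [hP, conjTranspose_smul, conjTranspose_add, conjTranspose_smul, conjTranspose_one, hΔH]
        congr 1 <;> simp [Complex.ext_iff]
      have hQH : Q.IsHermitian := by
        unfold Matrix.IsHermitian
        rw [hQ, conjTranspose_smul, conjTranspose_sub, conjTranspose_smul, conjTranspose_one, hΔH]
        congr 1 <;> simp [Complex.ext_iff]
      have hP00 : (P 0 0).re = (t + (Δ 0 0).re) / 2 := by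
        simp [hP, one_apply, Complex.mul_re]; ring
      have hP11 : (P 1 1).re = (t - (Δ 0 0).re) / 2 := by
        simp [hP, one_apply, Complex.mul_re, h11]; ring
      have hP01 : Complex.normSq (P 0 1) = Complex.normSq (Δ 0 1) / 4 := by
        simp [hP, one_apply, Complex.normSq_apply, Complex.mul_re, Complex.mul_im]; ring
      have hQ00 : (Q 0 0).re = (t - (Δ 0 0).re) / 2 := by
        simp [hQ, one_apply, Complex.mul_re]; ring
      have hQ11 : (Q 1 1).re = (t + (Δ 0 0).re) / 2 := by
        simp [hQ, one_apply, Complex.mul_re, h11]; ring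
      have hQ01 : Complex.normSq (Q 0 1) = Complex.normSq (Δ 0 1) / 4 := by
        simp [hQ, one_apply, Complex.normSq_apply, Complex.mul_re, Complex.mul_im]; ring
      have hPpsd : P.PosSemidef := by
        refine Aux.psd_of_cond hPH ?_ ?_ ?_
        · rw [hP00]; linarith
        · rw [hP11]; linarith
        · rw [hP00, hP11, hP01, hb2]; nlinarith
      have hQpsd : Q.PosSemidef := by
        refine Aux.psd_of_cond hQH ?_ ?_ ?_
        · rw [hQ00]; linarith
        · rw [hQ11]; linarith
        · rw [hQ00, hQ11, hQ01, hb2]; nlinarith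
      have hPtr : P.trace = (t : ℂ) := by
        rw [hP, trace_smul, trace_add, trace_smul, trace_one, hΔtr]
        simp [smul_eq_mul, Fintype.card_fin]
        ring
      have hQtr : Q.trace = (t : ℂ) := by
        rw [hQ, trace_smul, trace_sub, trace_smul, trace_one, hΔtr]
        simp [smul_eq_mul, Fintype.card_fin]
        ring
      set DP : Matrix (Fin 2) (Fin 2) ℂ := ((t : ℝ) : ℂ)⁻¹ • P with hDPdef
      set DQ : Matrix (Fin 2) (Fin 2) ℂ := ((t : ℝ) : ℂ)⁻¹ • Q with hDQdef
      have hDP : IsDensity DP := by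
        constructor
        · have := Aux.psd_smul hPpsd (inv_nonneg.2 htnn)
          rwa [Complex.ofReal_inv] at this
        · rw [hDPdef, trace_smul, hPtr, smul_eq_mul, inv_mul_cancel₀ htC]
      have hDQ : IsDensity DQ := by
        constructor
        · have := Aux.psd_smul hQpsd (inv_nonneg.2 htnn)
          rwa [Complex.ofReal_inv] at this
        · rw [hDQdef, trace_smul, hQtr, smul_eq_mul, inv_mul_cancel₀ htC]
      set A : Matrix (Fin 2) (Fin 2) ℂ := ((t : ℝ) : ℂ) • G DP with hAdef
      set B : Matrix (Fin 2) (Fin 2) ℂ := ((t : ℝ) : ℂ) • G DQ with hBdef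
      have hApsd : A.PosSemidef := Aux.psd_smul (hPos DP hDP).1 htnn
      have hBpsd : B.PosSemidef := Aux.psd_smul (hPos DQ hDQ).1 htnn
      have htrA : A.trace = ((t : ℝ) : ℂ) := by
        rw [hAdef, trace_smul, (hPos DP hDP).2, smul_eq_mul, mul_one]
      have htrB : B.trace = ((t : ℝ) : ℂ) := by
        rw [hBdef, trace_smul, (hPos DQ hDQ).2, smul_eq_mul, mul_one]
      have hPQ : P - Q = Δ := by
        rw [hP, hQ]
        ext i j
        simp only [Matrix.sub_apply, Matrix.smul_apply, Matrix.add_apply, smul_eq_mul]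
        ring
      have hAB : A - B = M := by
        rw [hAdef, hBdef, ← smul_sub, ← map_sub, hDPdef, hDQdef, ← smul_sub, hPQ,
          LinearMap.map_smul, smul_smul, mul_inv_cancel₀ htC, one_smul, hΔ, map_sub, hM]
      have hkey := Aux.key_ineq hApsd hBpsd htrA htrB
      rw [hAB] at hkey
      calc (M 0 0).re ^ 2 + Complex.normSq (M 0 1) ≤ t ^ 2 := hkey
        _ = k := ht2
  calc 2 * Real.sqrt ((M 0 0).re ^ 2 + Complex.normSq (M 0 1))
      ≤ 2 * Real.sqrt k := by
        have := Real.sqrt_le_sqrt hmain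
        linarith
    _ = _ := by rw [hk]
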